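/- arXiv:1508.04351 — 2 statements merged into one kernel-verified Lean document; each statement's English description precedes it below -/
import Mathlib

section
/- Let S be a nonnegative integrable random variable on a probability space with m := 1 − E[S] satisfying 0 ≤ m < 1, and fix T > 0. Then for every x ∈ ℝ and every σ ∈ [0,∞): C_BS(x,σ) = E[(S − e^x)₊] + m holds if and only if P_BS(x,σ) = E[(e^x − S)₊]. Consequently the implied volatility of the fully collateralised Call is well defined on all of ℝ and coincides with the Put-implied volatility: I_S^1(x) = I_S^p(x) for all x ∈ ℝ. -/
open MeasureTheory Filter

/-- Standard normal cumulative distribution function. -/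
noncomputable def stdNormalCDF (y : ℝ) : ℝ :=
  ∫ t in Set.Iic y, Real.exp (-t ^ 2 / 2) / Real.sqrt (2 * Real.pi)

/-- Black-Scholes d₊ (maturity `T`, log-strike `x`, volatility `σ`). -/
noncomputable def dplus (T x σ : ℝ) : ℝ := -x / (σ * Real.sqrt T) + σ * Real.sqrt T / 2

/-- Black-Scholes d₋ (maturity `T`, log-strike `x`, volatility `σ`). -/
noncomputable def dminus (T x σ : ℝ) : ℝ := -x / (σ * Real.sqrt T) - σ * Real.sqrt T / 2

/-- Black-Scholes Call price (maturity `T`, log-strike `x`, volatility `σ`),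
with the convention `CBS T x 0 = max (1 - exp x) 0`. -/
noncomputable def CBS (T x σ : ℝ) : ℝ :=
  if σ = 0 then max (1 - Real.exp x) 0
  else stdNormalCDF (dplus T x σ) - Real.exp x * stdNormalCDF (dminus T x σ)

/-- Black-Scholes Put price (maturity `T`, log-strike `x`, volatility `σ`),
with the convention `PBS T x 0 = max (exp x - 1) 0`. -/
noncomputable def PBS (T x σ : ℝ) : ℝ :=
  if σ = 0 then max (Real.exp x - 1) 0
  else Real.exp x * stdNormalCDF (-dminus T x σ) - stdNormalCDF (-dplus T x σ)

open Topology intervalIntegral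


noncomputable def stdGauss (t : ℝ) : ℝ := Real.exp (-t ^ 2 / 2) / Real.sqrt (2 * Real.pi)

lemma stdGauss_pos (t : ℝ) : 0 < stdGauss t :=
  div_pos (Real.exp_pos _) (Real.sqrt_pos.2 (by positivity))

lemma stdGauss_continuous : Continuous stdGauss := by
  unfold stdGauss; fun_prop

lemma stdGauss_eq : stdGauss = fun t => Real.exp (-(1/2 : ℝ) * t ^ 2) / Real.sqrt (2 * Real.pi) := by
  funext t; simp only [stdGauss]; congr 1; ring

lemma stdGauss_integrable : Integrable stdGauss := by
  rw [stdGauss_eq]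
  exact (integrable_exp_neg_mul_sq (by norm_num : (0:ℝ) < 1/2)).div_const _

lemma stdGauss_total : ∫ t, stdGauss t = 1 := by
  have h := integral_gaussian (1/2 : ℝ)
  rw [show Real.pi / (1/2 : ℝ) = 2 * Real.pi by ring] at h
  rw [stdGauss_eq, MeasureTheory.integral_div, h,
    div_self (ne_of_gt (Real.sqrt_pos.2 (by positivity)))]

lemma sNC_eq (y : ℝ) : stdNormalCDF y = ∫ t in Set.Iic y, stdGauss t := rfl

lemma sNC_sub (a b : ℝ) : stdNormalCDF b - stdNormalCDF a = ∫ t in a..b, stdGauss t := by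
  rw [sNC_eq, sNC_eq]
  exact integral_Iic_sub_Iic stdGauss_integrable.integrableOn stdGauss_integrable.integrableOn

lemma sNC_hasDerivAt (y : ℝ) : HasDerivAt stdNormalCDF (stdGauss y) y := by
  have h := (stdGauss_continuous.integral_hasStrictDerivAt 0 y).hasDerivAt
  have heq : stdNormalCDF = fun u => stdNormalCDF 0 + ∫ t in (0:ℝ)..u, stdGauss t := by
    funext u; rw [← sNC_sub]; ring
  rw [heq]
  simpa using h.const_add (stdNormalCDF 0)

lemma sNC_mono : Monotone stdNormalCDF := by
  intro a b hab
  have h := sNC_sub a b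
  have hpos : 0 ≤ ∫ t in a..b, stdGauss t :=
    intervalIntegral.integral_nonneg hab fun t _ => (stdGauss_pos t).le
  linarith

lemma sNC_nonneg (y : ℝ) : 0 ≤ stdNormalCDF y :=
  setIntegral_nonneg measurableSet_Iic fun t _ => (stdGauss_pos t).le

lemma sNC_le_one (y : ℝ) : stdNormalCDF y ≤ 1 := by
  rw [sNC_eq, ← stdGauss_total]
  exact setIntegral_le_integral stdGauss_integrable
    (Eventually.of_forall fun t => (stdGauss_pos t).le)

lemma sNC_neg (y : ℝ) : stdNormalCDF (-y) = 1 - stdNormalCDF y := by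
  have h1 : stdNormalCDF (-y) = ∫ t in Set.Ioi y, stdGauss t := by
    rw [sNC_eq]
    have h2 : (∫ t in Set.Iic (-y), stdGauss t) = ∫ t in Set.Iic (-y), stdGauss (-t) := by
      apply setIntegral_congr_fun measurableSet_Iic
      intro t _; simp [stdGauss, neg_sq]
    rw [h2, integral_comp_neg_Iic, neg_neg]
  have h3 := integral_Iic_add_Ioi (b := y) (f := stdGauss) (μ := volume)
    stdGauss_integrable.integrableOn stdGauss_integrable.integrableOn
  rw [stdGauss_total] at h3
  rw [h1, sNC_eq]
  linarith

lemma sNC_tendsto_atTop : Tendsto stdNormalCDF atTop (𝓝 1) := by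
  have h := tendsto_setIntegral_of_monotone (μ := volume) (f := stdGauss)
    (s := fun y : ℝ => Set.Iic y) (fun y => measurableSet_Iic)
    (fun a b hab => Set.Iic_subset_Iic.2 hab)
    (by rw [Set.iUnion_Iic]; exact stdGauss_integrable.integrableOn)
  rw [Set.iUnion_Iic] at h
  simp only [Measure.restrict_univ, stdGauss_total] at h
  exact h

lemma sNC_tendsto_atBot : Tendsto stdNormalCDF atBot (𝓝 0) := by
  have h : Tendsto (fun y : ℝ => 1 - stdNormalCDF (-y)) atBot (𝓝 0) := by
    have h2 := sNC_tendsto_atTop.comp tendsto_neg_atBot_atTop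
    have h3 := (tendsto_const_nhds (x := (1:ℝ)) (f := atBot)).sub h2
    simpa using h3
  exact h.congr fun y => by have := sNC_neg y; linarith
section BS

variable {T x : ℝ} (hT : 0 < T)

lemma gauss_identity {σ : ℝ} (hσ : σ ≠ 0) (hT : 0 < T) :
    Real.exp x * stdGauss (dminus T x σ) = stdGauss (dplus T x σ) := by
  have hc : Real.sqrt T ≠ 0 := ne_of_gt (Real.sqrt_pos.2 hT)
  simp only [stdGauss]
  rw [mul_div_assoc', ← Real.exp_add]
  congr 2
  simp only [dplus, dminus]
  field_simp
  ring

lemma hasDerivAt_dplus {σ : ℝ} (hσ : 0 < σ) (hT : 0 < T) :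
    HasDerivAt (dplus T x) (x / (Real.sqrt T * σ ^ 2) + Real.sqrt T / 2) σ := by
  set c := Real.sqrt T with hc
  have hc0 : 0 < c := Real.sqrt_pos.2 hT
  have h1 : HasDerivAt (fun s : ℝ => (-x/c) * s⁻¹ + (c/2) * s)
      ((-x/c) * (-(σ^2)⁻¹) + (c/2) * 1) σ :=
    ((hasDerivAt_inv (ne_of_gt hσ)).const_mul (-x/c)).add ((hasDerivAt_id σ).const_mul (c/2))
  have heq : dplus T x = fun s : ℝ => (-x/c) * s⁻¹ + (c/2) * s := by
    funext s
    simp only [dplus, ← hc]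
    rw [div_mul_eq_div_div_swap, div_eq_mul_inv (-x/c)]
    ring
  rw [heq]
  convert h1 using 1
  field_simp

lemma hasDerivAt_dminus {σ : ℝ} (hσ : 0 < σ) (hT : 0 < T) :
    HasDerivAt (dminus T x) (x / (Real.sqrt T * σ ^ 2) - Real.sqrt T / 2) σ := by
  set c := Real.sqrt T with hc
  have hc0 : 0 < c := Real.sqrt_pos.2 hT
  have h1 : HasDerivAt (fun s : ℝ => (-x/c) * s⁻¹ - (c/2) * s)
      ((-x/c) * (-(σ^2)⁻¹) - (c/2) * 1) σ :=
    ((hasDerivAt_inv (ne_of_gt hσ)).const_mul (-x/c)).sub ((hasDerivAt_id σ).const_mul (c/2))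
  have heq : dminus T x = fun s : ℝ => (-x/c) * s⁻¹ - (c/2) * s := by
    funext s
    simp only [dminus, ← hc]
    rw [div_mul_eq_div_div_swap, div_eq_mul_inv (-x/c)]
    ring
  rw [heq]
  convert h1 using 1
  field_simp

lemma CBS_hasDerivAt {σ : ℝ} (hσ : 0 < σ) (hT : 0 < T) :
    HasDerivAt (CBS T x) (stdGauss (dplus T x σ) * Real.sqrt T) σ := by
  have h1 := (sNC_hasDerivAt (dplus T x σ)).comp σ (hasDerivAt_dplus hσ hT)
  have h2 := ((sNC_hasDerivAt (dminus T x σ)).comp σ (hasDerivAt_dminus hσ hT)).const_mul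
    (Real.exp x)
  have h3 := h1.sub h2
  have h4 : HasDerivAt (fun s => stdNormalCDF (dplus T x s) -
      Real.exp x * stdNormalCDF (dminus T x s)) (stdGauss (dplus T x σ) * Real.sqrt T) σ := by
    convert h3 using 1
    · rfl
    · rfl
    · rfl
    rw [← mul_assoc, gauss_identity (ne_of_gt hσ) hT]
    ring
  apply h4.congr_of_eventuallyEq
  filter_upwards [eventually_ne_nhds (ne_of_gt hσ)] with s hs
  simp [CBS, hs]

lemma CBS_strictMonoOn (hT : 0 < T) : StrictMonoOn (CBS T x) (Set.Ioi 0) := by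
  have hi : interior (Set.Ioi (0:ℝ)) = Set.Ioi 0 := interior_Ioi
  apply strictMonoOn_of_hasDerivWithinAt_pos (convex_Ioi 0)
    (f' := fun σ => stdGauss (dplus T x σ) * Real.sqrt T)
  · intro σ hσ
    exact ((CBS_hasDerivAt hσ hT).continuousAt).continuousWithinAt
  · intro σ hσ
    rw [hi] at hσ ⊢
    exact (CBS_hasDerivAt hσ hT).hasDerivWithinAt
  · intro σ hσ
    rw [hi] at hσ
    exact mul_pos (stdGauss_pos _) (Real.sqrt_pos.2 hT)

lemma CBS_tendsto_atTop (hT : 0 < T) : Tendsto (CBS T x) atTop (𝓝 1) := by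
  set c := Real.sqrt T with hc
  have hc0 : 0 < c := Real.sqrt_pos.2 hT
  have hg : Tendsto (fun σ : ℝ => σ * c) atTop atTop := tendsto_id.atTop_mul_const hc0
  have h1 : Tendsto (fun σ : ℝ => -x / (σ * c)) atTop (𝓝 0) :=
    tendsto_const_nhds.div_atTop hg
  have h2 : Tendsto (fun σ : ℝ => σ * c / 2) atTop atTop := hg.atTop_div_const (by norm_num)
  have hdp : Tendsto (fun σ => dplus T x σ) atTop atTop := by
    have := h1.add_atTop h2
    exact this.congr fun σ => by simp [dplus, ← hc]
  have hdm : Tendsto (fun σ => dminus T x σ) atTop atBot := by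
    have h3 : Tendsto (fun σ : ℝ => -(σ * c / 2)) atTop atBot := tendsto_neg_atBot_iff.2 h2
    have := h1.add_atBot h3
    exact this.congr fun σ => by simp [dminus, ← hc]; ring
  have hN1 := sNC_tendsto_atTop.comp hdp
  have hN2 := sNC_tendsto_atBot.comp hdm
  have h4 : Tendsto (fun σ => stdNormalCDF (dplus T x σ) -
      Real.exp x * stdNormalCDF (dminus T x σ)) atTop (𝓝 (1 - Real.exp x * 0)) :=
    hN1.sub (hN2.const_mul _)
  rw [mul_zero, sub_zero] at h4
  apply h4.congr'
  filter_upwards [eventually_ne_atTop (0:ℝ)] with σ hσ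
  simp [CBS, hσ]

lemma CBS_tendsto_zero (hT : 0 < T) :
    Tendsto (CBS T x) (𝓝[>] 0) (𝓝 (max (1 - Real.exp x) 0)) := by
  set c := Real.sqrt T with hc
  have hc0 : 0 < c := Real.sqrt_pos.2 hT
  have hhalf : Tendsto (fun σ : ℝ => σ * c / 2) (𝓝[>] 0) (𝓝 0) := by
    have : Tendsto (fun σ : ℝ => σ * c / 2) (𝓝 0) (𝓝 (0 * c / 2)) :=
      ((continuous_id.mul continuous_const).div_const 2).tendsto 0
    rw [zero_mul, zero_div] at this
    exact this.mono_left nhdsWithin_le_nhds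
  have hinv : Tendsto (fun σ : ℝ => (σ * c)⁻¹) (𝓝[>] 0) atTop := by
    apply tendsto_inv_nhdsGT_zero.comp
    have h : Tendsto (fun σ : ℝ => σ * c) (𝓝 0) (𝓝 (0 * c)) :=
      (continuous_id.mul continuous_const).tendsto 0
    rw [zero_mul] at h
    apply tendsto_nhdsWithin_of_tendsto_nhds_of_eventually_within
      _ (h.mono_left nhdsWithin_le_nhds)
    filter_upwards [self_mem_nhdsWithin] with σ (hσ : 0 < σ)
    exact mul_pos hσ hc0
  rcases lt_trichotomy x 0 with hx | hx | hx
  · -- x < 0 : d± → +∞, CBS → 1 - e^x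
    have hfirst : Tendsto (fun σ : ℝ => -x * (σ * c)⁻¹) (𝓝[>] 0) atTop :=
      hinv.const_mul_atTop (by linarith)
    have hdp : Tendsto (fun σ => dplus T x σ) (𝓝[>] 0) atTop := by
      have := hhalf.add_atTop hfirst
      apply this.congr fun σ => by simp [dplus, ← hc, div_eq_mul_inv]; ring
    have hdm : Tendsto (fun σ => dminus T x σ) (𝓝[>] 0) atTop := by
      have h3 : Tendsto (fun σ : ℝ => -(σ * c / 2)) (𝓝[>] 0) (𝓝 (-0)) := hhalf.neg
      rw [neg_zero] at h3
      have := h3.add_atTop hfirst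
      apply this.congr fun σ => by simp [dminus, ← hc, div_eq_mul_inv]; ring
    have h4 : Tendsto (fun σ => stdNormalCDF (dplus T x σ) -
        Real.exp x * stdNormalCDF (dminus T x σ)) (𝓝[>] 0) (𝓝 (1 - Real.exp x * 1)) :=
      (sNC_tendsto_atTop.comp hdp).sub ((sNC_tendsto_atTop.comp hdm).const_mul _)
    rw [mul_one] at h4
    have hmax : max (1 - Real.exp x) 0 = 1 - Real.exp x := by
      have : Real.exp x < 1 := Real.exp_lt_one_iff.2 hx
      exact max_eq_left (by linarith)
    rw [hmax]
    apply h4.congr'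
    filter_upwards [self_mem_nhdsWithin] with σ (hσ : 0 < σ)
    simp [CBS, ne_of_gt hσ]
  · -- x = 0
    subst hx
    have hdp : Tendsto (fun σ => dplus T 0 σ) (𝓝[>] 0) (𝓝 0) := by
      apply hhalf.congr fun σ => by simp [dplus, ← hc]
    have hdm : Tendsto (fun σ => dminus T 0 σ) (𝓝[>] 0) (𝓝 (-0)) := by
      apply hhalf.neg.congr fun σ => by simp [dminus, ← hc]
    rw [neg_zero] at hdm
    have hNc : Continuous stdNormalCDF := by
      rw [continuous_iff_continuousAt]
      exact fun y => (sNC_hasDerivAt y).continuousAt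
    have h4 : Tendsto (fun σ => stdNormalCDF (dplus T 0 σ) -
        Real.exp 0 * stdNormalCDF (dminus T 0 σ)) (𝓝[>] 0)
        (𝓝 (stdNormalCDF 0 - Real.exp 0 * stdNormalCDF 0)) :=
      ((hNc.tendsto 0).comp hdp).sub (((hNc.tendsto 0).comp hdm).const_mul _)
    have : stdNormalCDF 0 - Real.exp 0 * stdNormalCDF 0 = max (1 - Real.exp 0) 0 := by
      simp
    rw [this] at h4
    apply h4.congr'
    filter_upwards [self_mem_nhdsWithin] with σ (hσ : 0 < σ)
    simp [CBS, ne_of_gt hσ]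
  · -- x > 0 : d± → -∞, CBS → 0
    have hfirst : Tendsto (fun σ : ℝ => -x * (σ * c)⁻¹) (𝓝[>] 0) atBot :=
      hinv.const_mul_atTop_of_neg (by linarith)
    have hdp : Tendsto (fun σ => dplus T x σ) (𝓝[>] 0) atBot := by
      have := hhalf.add_atBot hfirst
      apply this.congr fun σ => by simp [dplus, ← hc, div_eq_mul_inv]; ring
    have hdm : Tendsto (fun σ => dminus T x σ) (𝓝[>] 0) atBot := by
      have h3 : Tendsto (fun σ : ℝ => -(σ * c / 2)) (𝓝[>] 0) (𝓝 (-0)) := hhalf.neg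
      rw [neg_zero] at h3
      have := h3.add_atBot hfirst
      apply this.congr fun σ => by simp [dminus, ← hc, div_eq_mul_inv]; ring
    have h4 : Tendsto (fun σ => stdNormalCDF (dplus T x σ) -
        Real.exp x * stdNormalCDF (dminus T x σ)) (𝓝[>] 0) (𝓝 (0 - Real.exp x * 0)) :=
      (sNC_tendsto_atBot.comp hdp).sub ((sNC_tendsto_atBot.comp hdm).const_mul _)
    rw [mul_zero, sub_zero] at h4
    have hmax : max (1 - Real.exp x) 0 = 0 := by
      have h5 : 1 < Real.exp x := Real.one_lt_exp_iff.2 hx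
      exact max_eq_right (by linarith)
    rw [hmax]
    apply h4.congr'
    filter_upwards [self_mem_nhdsWithin] with σ (hσ : 0 < σ)
    simp [CBS, ne_of_gt hσ]
  
end BS

lemma CBS_zero (T x : ℝ) : CBS T x 0 = max (1 - Real.exp x) 0 := by simp [CBS]

lemma CBS_gt_zero_val {T x σ : ℝ} (hT : 0 < T) (hσ : 0 < σ) :
    max (1 - Real.exp x) 0 < CBS T x σ := by
  have hlim := CBS_tendsto_zero (x := x) hT
  have h1 : CBS T x (σ/2) < CBS T x σ :=
    CBS_strictMonoOn hT (Set.mem_Ioi.2 (half_pos hσ)) (Set.mem_Ioi.2 hσ) (half_lt_self hσ)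
  have h2 : max (1 - Real.exp x) 0 ≤ CBS T x (σ/2) := by
    apply le_of_tendsto hlim
    filter_upwards [Ioc_mem_nhdsGT_of_mem (Set.mem_Ico.2 ⟨le_refl 0, half_pos hσ⟩)] with τ hτ
    exact ((CBS_strictMonoOn (x := x) hT).monotoneOn) (Set.mem_Ioi.2 hτ.1)
      (Set.mem_Ioi.2 (half_pos hσ)) hτ.2
  linarith

lemma BS_parity (T x σ : ℝ) : CBS T x σ - PBS T x σ = 1 - Real.exp x := by
  by_cases hσ : σ = 0
  · subst hσ
    simp only [CBS, PBS, if_pos]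
    rcases le_total (Real.exp x) 1 with h | h
    · rw [max_eq_left (by linarith), max_eq_right (by linarith)]; ring
    · rw [max_eq_right (by linarith), max_eq_left (by linarith)]; ring
  · simp only [CBS, PBS, if_neg hσ]
    rw [sNC_neg (dplus T x σ), sNC_neg (dminus T x σ)]
    ring

/-- a volatility matches the fully collateralised Call price iff it matches
the Put price; hence the fully collateralised Call implied volatility is well defined on
all of `ℝ` and coincides with the Put-implied volatility. -/
theorem fully_collateralised_call_iv_eq_put_iv
    {Ω : Type*} [MeasurableSpace Ω] (μ : Measure Ω) [IsProbabilityMeasure μ]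
    (S : Ω → ℝ) (hS : ∀ ω, 0 ≤ S ω) (hSint : Integrable S μ)
    (m : ℝ) (hm : m = 1 - ∫ ω, S ω ∂μ) (hm0 : 0 ≤ m) (hm1 : m < 1)
    (T : ℝ) (hT : 0 < T) (x : ℝ) :
    (∀ σ : ℝ, 0 ≤ σ →
      (CBS T x σ = (∫ ω, max (S ω - Real.exp x) 0 ∂μ) + m ↔
        PBS T x σ = ∫ ω, max (Real.exp x - S ω) 0 ∂μ)) ∧
    (∃! σ : ℝ, 0 ≤ σ ∧ CBS T x σ = (∫ ω, max (S ω - Real.exp x) 0 ∂μ) + m) := by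
  have hk0 : 0 < Real.exp x := Real.exp_pos x
  have Cint : Integrable (fun ω => max (S ω - Real.exp x) 0) μ :=
    (hSint.sub (integrable_const _)).pos_part
  have Pint : Integrable (fun ω => max (Real.exp x - S ω) 0) μ :=
    ((integrable_const _).sub hSint).pos_part
  have hSint_val : ∫ ω, S ω ∂μ = 1 - m := by linarith
  have hSparity : (∫ ω, max (S ω - Real.exp x) 0 ∂μ) - (∫ ω, max (Real.exp x - S ω) 0 ∂μ)
      = (1 - m) - Real.exp x := by
    rw [← integral_sub Cint Pint]
    have heq : ∀ ω, max (S ω - Real.exp x) 0 - max (Real.exp x - S ω) 0 = S ω - Real.exp x := by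
      intro ω; rcases le_total (S ω) (Real.exp x) with h | h
      · rw [max_eq_right (by linarith), max_eq_left (by linarith)]; ring
      · rw [max_eq_left (by linarith), max_eq_right (by linarith)]; ring
    simp only [heq]
    rw [integral_sub hSint (integrable_const _), MeasureTheory.integral_const, probReal_univ, hSint_val]
    simp
  have hC0 : 0 ≤ ∫ ω, max (S ω - Real.exp x) 0 ∂μ :=
    integral_nonneg fun ω => le_max_right _ _
  have hCge : 1 - m - Real.exp x ≤ ∫ ω, max (S ω - Real.exp x) 0 ∂μ := by
    have h1 : ∫ ω, (S ω - Real.exp x) ∂μ ≤ ∫ ω, max (S ω - Real.exp x) 0 ∂μ :=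
      integral_mono (hSint.sub (integrable_const _)) Cint fun ω => le_max_left _ _
    rw [integral_sub hSint (integrable_const _), MeasureTheory.integral_const, probReal_univ, hSint_val] at h1
    simp at h1
    linarith
  have ht1 : (∫ ω, max (S ω - Real.exp x) 0 ∂μ) + m < 1 := by
    by_contra hcon
    push_neg at hcon
    have hmin_eq : (fun ω => min (S ω) (Real.exp x))
        = fun ω => S ω - max (S ω - Real.exp x) 0 := by
      funext ω; rcases le_total (S ω) (Real.exp x) with h | h
      · rw [min_eq_left h, max_eq_right (by linarith)]; ring
      · rw [min_eq_right h, max_eq_left (by linarith)]; ring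
    have hminI : Integrable (fun ω => min (S ω) (Real.exp x)) μ := by
      rw [hmin_eq]; exact hSint.sub Cint
    have hmineq : ∫ ω, min (S ω) (Real.exp x) ∂μ
        = (1 - m) - ∫ ω, max (S ω - Real.exp x) 0 ∂μ := by
      rw [hmin_eq, integral_sub hSint Cint, hSint_val]
    have hmin_nonneg : ∀ ω, 0 ≤ min (S ω) (Real.exp x) :=
      fun ω => le_min (hS ω) hk0.le
    have hmin0 : ∫ ω, min (S ω) (Real.exp x) ∂μ = 0 :=
      le_antisymm (by linarith) (integral_nonneg hmin_nonneg)
    have hae : (fun ω => min (S ω) (Real.exp x)) =ᵐ[μ] 0 :=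
      (integral_eq_zero_iff_of_nonneg hmin_nonneg hminI).1 hmin0
    have hSae : S =ᵐ[μ] 0 := by
      filter_upwards [hae] with ω hω
      simp only [Pi.zero_apply] at hω ⊢
      by_contra h
      have h1 : 0 < S ω := lt_of_le_of_ne (hS ω) (Ne.symm h)
      have h2 : 0 < min (S ω) (Real.exp x) := lt_min h1 hk0
      rw [hω] at h2
      exact lt_irrefl 0 h2
    have hzero : ∫ ω, S ω ∂μ = 0 := by
      rw [integral_congr_ae hSae]; simp
    rw [hzero] at hSint_val
    linarith
  constructor
  · intro σ _
    have hbs := BS_parity T x σ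
    constructor <;> intro h <;> linarith
  · have hCBS0 : CBS T x 0 = max (1 - Real.exp x) 0 := CBS_zero T x
    have htlow : max (1 - Real.exp x) 0 ≤ (∫ ω, max (S ω - Real.exp x) 0 ∂μ) + m :=
      max_le (by linarith) (by linarith)
    rcases eq_or_lt_of_le htlow with heq | hlt
    · refine ⟨0, ⟨le_refl 0, hCBS0.trans heq⟩, ?_⟩
      rintro σ' ⟨h1, h2⟩
      rcases eq_or_lt_of_le h1 with h | h
      · exact h.symm
      · exfalso
        have hgt := CBS_gt_zero_val (x := x) hT h
        rw [heq] at hgt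
        linarith
    · have hlim0 := CBS_tendsto_zero (x := x) hT
      obtain ⟨a, haCBS, ha0⟩ :=
        ((hlim0.eventually_lt_const hlt).and self_mem_nhdsWithin).exists
      have ha0' : 0 < a := ha0
      have hlimT := CBS_tendsto_atTop (x := x) hT
      obtain ⟨b, hbCBS, hab1⟩ :=
        ((hlimT.eventually_const_lt ht1).and (eventually_ge_atTop (a + 1))).exists
      have hab' : a ≤ b := by linarith
      have hcont : ContinuousOn (CBS T x) (Set.Icc a b) := fun σ hσ =>
        ((CBS_hasDerivAt (lt_of_lt_of_le ha0' hσ.1) hT).continuousAt).continuousWithinAt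
      obtain ⟨σ₀, hσ₀mem, hσ₀⟩ := intermediate_value_Icc hab' hcont ⟨haCBS.le, hbCBS.le⟩
      have hσ₀pos : 0 < σ₀ := lt_of_lt_of_le ha0' hσ₀mem.1
      refine ⟨σ₀, ⟨hσ₀pos.le, hσ₀⟩, ?_⟩
      rintro σ' ⟨h1, h2⟩
      rcases eq_or_lt_of_le h1 with h | h
      · exfalso
        rw [← h, hCBS0] at h2
        linarith
      · exact (CBS_strictMonoOn (x := x) hT).injOn (Set.mem_Ioi.2 h) (Set.mem_Ioi.2 hσ₀pos)
          (h2.trans hσ₀.symm)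
end

section
/- Fix T > 0, let c ∈ (0,1) and let I : ℝ → (0,∞) be a function such that C_BS(x, I(x)) converges to c as x → ∞. Then d₊(x, I(x)) converges, as x → ∞, to the unique real number y with N(y) = c. -/
open MeasureTheory Filter

/- ### Auxiliary lemmas -/

noncomputable def gaussPDF (t : ℝ) : ℝ := Real.exp (-t ^ 2 / 2) / Real.sqrt (2 * Real.pi)

lemma gaussPDF_pos (t : ℝ) : 0 < gaussPDF t := by
  unfold gaussPDF
  positivity

lemma gaussPDF_integrable : Integrable gaussPDF := by
  have h : gaussPDF = fun t : ℝ => Real.exp (-(1/2 : ℝ) * t ^ 2) * (Real.sqrt (2 * Real.pi))⁻¹ := by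
    funext t
    unfold gaussPDF
    rw [div_eq_mul_inv]
    congr 2
    ring
  rw [h]
  exact (integrable_exp_neg_mul_sq (by norm_num)).mul_const _

lemma gaussPDF_continuous : Continuous gaussPDF := by
  unfold gaussPDF
  fun_prop

lemma stdNormalCDF_eq (y : ℝ) : stdNormalCDF y = ∫ t in Set.Iic y, gaussPDF t := rfl

lemma cdf_sub (a b : ℝ) : stdNormalCDF b - stdNormalCDF a = ∫ t in a..b, gaussPDF t := by
  rw [stdNormalCDF_eq, stdNormalCDF_eq]
  exact intervalIntegral.integral_Iic_sub_Iic gaussPDF_integrable.integrableOn gaussPDF_integrable.integrableOn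

lemma stdNormalCDF_strictMono : StrictMono stdNormalCDF := by
  intro a b hab
  have h := cdf_sub a b
  have hpos : 0 < ∫ t in a..b, gaussPDF t :=
    intervalIntegral.intervalIntegral_pos_of_pos (gaussPDF_integrable.intervalIntegrable)
      (fun t => gaussPDF_pos t) hab
  linarith

lemma stdNormalCDF_continuous : Continuous stdNormalCDF := by
  have h : stdNormalCDF = fun y => (∫ t in (0:ℝ)..y, gaussPDF t) + stdNormalCDF 0 := by
    funext y
    have := cdf_sub 0 y
    linarith
  rw [h]
  exact (intervalIntegral.continuous_primitive
    (fun a b => gaussPDF_integrable.intervalIntegrable) 0).add continuous_const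

lemma stdNormalCDF_nonneg (z : ℝ) : 0 ≤ stdNormalCDF z :=
  setIntegral_nonneg measurableSet_Iic (fun t _ => (gaussPDF_pos t).le)

set_option maxHeartbeats 1000000 in
lemma integral_Iic_mul_exp (z : ℝ) :
    ∫ t in Set.Iic z, t * Real.exp (-t ^ 2 / 2) = -Real.exp (-z ^ 2 / 2) := by
  have hint : Integrable (fun t : ℝ => t * Real.exp (-t ^ 2 / 2)) := by
    have h : (fun t : ℝ => t * Real.exp (-t ^ 2 / 2))
        = fun t : ℝ => t * Real.exp (-(1/2 : ℝ) * t ^ 2) := by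
      funext t; congr 2; ring
    rw [h]
    exact integrable_mul_exp_neg_mul_sq (by norm_num)
  have hderiv : ∀ t ∈ Set.Iio z, HasDerivAt (fun t : ℝ => -Real.exp (-t ^ 2 / 2))
      (t * Real.exp (-t ^ 2 / 2)) t := by
    intro t _
    have h1 : HasDerivAt (fun u : ℝ => -u ^ 2 / 2) (-t) t := by
      have h0 : HasDerivAt (fun u : ℝ => u ^ 2) (2 * t) t := by
        simpa using hasDerivAt_pow 2 t
      have := (h0.neg).div_const 2
      convert this using 1
      · rfl
      · rfl
      · rfl
      · ring
    have := (h1.exp).neg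
    convert this using 1
    · rfl
    · rfl
    · rfl
    · ring
  have htend : Tendsto (fun t : ℝ => -Real.exp (-t ^ 2 / 2)) atBot (nhds 0) := by
    have h1 : Tendsto (fun t : ℝ => t ^ 2) atBot atTop := by
      apply tendsto_atBot_atTop.2
      intro b
      refine ⟨-(|b| + 1), fun x hx => ?_⟩
      nlinarith [sq_nonneg (x + |b| + 1), le_abs_self b, abs_nonneg b]
    have h2 : Tendsto (fun t : ℝ => -t ^ 2 / 2) atBot atBot := by
      have := tendsto_neg_atTop_atBot.comp (h1.atTop_div_const (by norm_num : (0:ℝ) < 2))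
      simpa [Function.comp_def, neg_div] using this
    have := (Real.tendsto_exp_atBot).comp h2
    simpa using this.neg
  have hcont : ContinuousWithinAt (fun t : ℝ => -Real.exp (-t ^ 2 / 2)) (Set.Iic z) z :=
    (Continuous.neg (by fun_prop)).continuousWithinAt
  have := integral_Iic_of_hasDerivAt_of_tendsto hcont hderiv hint.integrableOn htend
  simpa using this

lemma stdNormalCDF_tail (z : ℝ) (hz : z < 0) :
    stdNormalCDF z ≤ Real.exp (-z ^ 2 / 2) / Real.sqrt (2 * Real.pi) / (-z) := by
  have hint : Integrable (fun t : ℝ => t * Real.exp (-t ^ 2 / 2)) := by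
    have h : (fun t : ℝ => t * Real.exp (-t ^ 2 / 2))
        = fun t : ℝ => t * Real.exp (-(1/2 : ℝ) * t ^ 2) := by
      funext t; congr 2; ring
    rw [h]
    exact integrable_mul_exp_neg_mul_sq (by norm_num)
  have key : stdNormalCDF z ≤ ∫ t in Set.Iic z, (t / z) * gaussPDF t := by
    rw [stdNormalCDF_eq]
    apply setIntegral_mono_on gaussPDF_integrable.integrableOn
    · have h : (fun t : ℝ => (t / z) * gaussPDF t)
          = fun t : ℝ => (z⁻¹ * (Real.sqrt (2 * Real.pi))⁻¹) * (t * Real.exp (-t ^ 2 / 2)) := by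
        funext t; unfold gaussPDF; field_simp; try ring
      rw [h]
      exact (hint.const_mul _).integrableOn
    · exact measurableSet_Iic
    · intro t ht
      have h1 : (1 : ℝ) ≤ t / z := by
        rw [le_div_iff_of_neg hz]
        simpa using ht
      nlinarith [gaussPDF_pos t]
  have hcomp : ∫ t in Set.Iic z, (t / z) * gaussPDF t
      = Real.exp (-z ^ 2 / 2) / Real.sqrt (2 * Real.pi) / (-z) := by
    have h : (fun t : ℝ => (t / z) * gaussPDF t)
        = fun t : ℝ => (z⁻¹ * (Real.sqrt (2 * Real.pi))⁻¹) * (t * Real.exp (-t ^ 2 / 2)) := by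
      funext t; unfold gaussPDF; field_simp; try ring
    rw [h, integral_const_mul, integral_Iic_mul_exp]
    have hs : Real.sqrt (2 * Real.pi) ≠ 0 := by positivity
    field_simp
  linarith [key, hcomp.le, hcomp.ge]

lemma stdNormalCDF_tendsto_imp (f : ℝ → ℝ) (l : Filter ℝ) [l.NeBot] (y : ℝ)
    (h : Tendsto (fun x => stdNormalCDF (f x)) l (nhds (stdNormalCDF y))) :
    Tendsto f l (nhds y) := by
  rw [tendsto_order]
  constructor
  · intro a ha
    have hlt : stdNormalCDF a < stdNormalCDF y := stdNormalCDF_strictMono ha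
    filter_upwards [h.eventually (eventually_gt_nhds hlt)] with x hx
    by_contra hcon
    push_neg at hcon
    exact absurd (stdNormalCDF_strictMono.monotone hcon) (not_le_of_gt hx)
  · intro b hb
    have hlt : stdNormalCDF y < stdNormalCDF b := stdNormalCDF_strictMono hb
    filter_upwards [h.eventually (eventually_lt_nhds hlt)] with x hx
    by_contra hcon
    push_neg at hcon
    exact absurd (stdNormalCDF_strictMono.monotone hcon) (not_le_of_gt hx)

/-- if `C_BS(x, I(x)) → c ∈ (0,1)` as `x → ∞`, then
`d₊(x, I(x)) → N⁻¹(c)`. -/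
theorem dplus_limit_from_call_price_limit (T : ℝ) (hT : 0 < T)
    (c : ℝ) (hc0 : 0 < c) (hc1 : c < 1)
    (I : ℝ → ℝ) (hIpos : ∀ x, 0 < I x)
    (hconv : Tendsto (fun x => CBS T x (I x)) atTop (nhds c))
    (y : ℝ) (hy : stdNormalCDF y = c) :
    Tendsto (fun x => dplus T x (I x)) atTop (nhds y) := by
  have hsT : 0 < Real.sqrt T := Real.sqrt_pos.mpr hT
  set s : ℝ → ℝ := fun x => I x * Real.sqrt T with hs_def
  have hs : ∀ x, 0 < s x := fun x => mul_pos (hIpos x) hsT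
  -- E x := exp x * N(d₋) tends to 0
  set E : ℝ → ℝ := fun x => Real.exp x * stdNormalCDF (dminus T x (I x)) with hE_def
  have hEnonneg : ∀ x, 0 ≤ E x := fun x =>
    mul_nonneg (Real.exp_pos x).le (stdNormalCDF_nonneg _)
  have hEbound : ∀ x : ℝ, 0 < x → E x ≤ (Real.sqrt (2 * x))⁻¹ := by
    intro x hx
    have hsx := hs x
    have hdm : dminus T x (I x) = -(x / s x + s x / 2) := by
      unfold dminus; rw [hs_def]; ring
    have hdmneg : dminus T x (I x) < 0 := by
      rw [hdm]
      have : 0 < x / s x + s x / 2 := by positivity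
      linarith
    -- AM-GM: sqrt(2x) ≤ x/s + s/2
    have hamgm : Real.sqrt (2 * x) ≤ x / s x + s x / 2 := by
      have h1 : Real.sqrt (2 * x) ≤ Real.sqrt ((x / s x + s x / 2) ^ 2) := by
        apply Real.sqrt_le_sqrt
        have h2 : (x / s x) * (s x / 2) = x / 2 := by field_simp; try ring
        nlinarith [sq_nonneg (x / s x - s x / 2)]
      rwa [Real.sqrt_sq (by positivity)] at h1
    -- tail bound
    have htail := stdNormalCDF_tail _ hdmneg
    have hexpid : Real.exp x * Real.exp (-(dminus T x (I x)) ^ 2 / 2)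
        = Real.exp (-(dplus T x (I x)) ^ 2 / 2) := by
      rw [← Real.exp_add]
      congr 1
      unfold dplus dminus
      have hI : I x ≠ 0 := ne_of_gt (hIpos x)
      have hT' : Real.sqrt T ≠ 0 := ne_of_gt hsT
      field_simp
      ring
    have h1 : E x ≤ Real.exp x *
        (Real.exp (-(dminus T x (I x)) ^ 2 / 2) / Real.sqrt (2 * Real.pi)
          / (-(dminus T x (I x)))) :=
      mul_le_mul_of_nonneg_left htail (Real.exp_pos x).le
    have h2 : Real.exp x *
        (Real.exp (-(dminus T x (I x)) ^ 2 / 2) / Real.sqrt (2 * Real.pi)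
          / (-(dminus T x (I x))))
        = Real.exp (-(dplus T x (I x)) ^ 2 / 2)
          / (Real.sqrt (2 * Real.pi) * (-(dminus T x (I x)))) := by
      rw [← hexpid]; ring
    have hsqpi : 1 ≤ Real.sqrt (2 * Real.pi) := by
      rw [show (1:ℝ) = Real.sqrt 1 by simp]
      apply Real.sqrt_le_sqrt
      nlinarith [Real.pi_gt_three]
    have hden : Real.sqrt (2 * x) ≤ Real.sqrt (2 * Real.pi) * (-(dminus T x (I x))) := by
      have hmd : -(dminus T x (I x)) = x / s x + s x / 2 := by rw [hdm]; ring
      rw [hmd]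
      calc Real.sqrt (2 * x) ≤ x / s x + s x / 2 := hamgm
        _ = 1 * (x / s x + s x / 2) := by ring
        _ ≤ Real.sqrt (2 * Real.pi) * (x / s x + s x / 2) := by
            apply mul_le_mul_of_nonneg_right hsqpi (by positivity)
    have h3 : Real.exp (-(dplus T x (I x)) ^ 2 / 2)
        / (Real.sqrt (2 * Real.pi) * (-(dminus T x (I x)))) ≤ 1 / Real.sqrt (2 * x) := by
      apply div_le_div₀ zero_le_one _ (Real.sqrt_pos.mpr (by linarith)) hden
      calc Real.exp (-(dplus T x (I x)) ^ 2 / 2) ≤ Real.exp 0 :=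
            Real.exp_le_exp.mpr (by nlinarith [sq_nonneg (dplus T x (I x))])
        _ = 1 := Real.exp_zero
    rw [one_div] at h3
    linarith [h1, h2.le, h2.ge]
  have hEtendsto : Tendsto E atTop (nhds 0) := by
    have hb : Tendsto (fun x : ℝ => (Real.sqrt (2 * x))⁻¹) atTop (nhds 0) := by
      apply Tendsto.inv_tendsto_atTop
      apply tendsto_atTop_atTop.2
      intro b
      refine ⟨b ^ 2, fun x hx => ?_⟩
      calc b ≤ |b| := le_abs_self b
        _ = Real.sqrt (b ^ 2) := (Real.sqrt_sq_eq_abs b).symm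
        _ ≤ Real.sqrt (2 * x) := Real.sqrt_le_sqrt (by nlinarith [sq_nonneg b])
    apply tendsto_of_tendsto_of_tendsto_of_le_of_le' tendsto_const_nhds hb
    · filter_upwards with x using hEnonneg x
    · filter_upwards [eventually_gt_atTop (0:ℝ)] with x hx using hEbound x hx
  -- N(d₊) → c
  have hNtendsto : Tendsto (fun x => stdNormalCDF (dplus T x (I x))) atTop (nhds c) := by
    have heq : ∀ x, stdNormalCDF (dplus T x (I x)) = CBS T x (I x) + E x := by
      intro x
      rw [CBS, if_neg (ne_of_gt (hIpos x))]
      ring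
    have := hconv.add hEtendsto
    rw [add_zero] at this
    exact this.congr (fun x => (heq x).symm)
  exact stdNormalCDF_tendsto_imp _ _ y (hy ▸ hNtendsto)
end
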